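/- Let d ≥ 2. There exists a constant C > 0 (depending only on d) such that for all t > 0 and all x, y ∈ ℝ^d₊: |∇_x (∇_x + ∇_y) H(x,y,t)| ≤ C t^{−d/2 − 1} (1 + |x'−y'|/√t) (1 + (x_d+y_d)²/t) e^{−|x'−y'|²/(4t)} e^{−(x_d+y_d)²/(4t)}, where ∇_x(∇_x+∇_y)H denotes the matrix of second derivatives ∂_{x_k}(∂_{x_i}+∂_{y_i})H. -/

import Mathlib

open MeasureTheory Real Set

/-- One-dimensional Gaussian heat kernel `G_t(ξ) = (4πt)^{−1/2} e^{−ξ²/(4t)}`. -/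
noncomputable def G1 (t ξ : ℝ) : ℝ := (4 * π * t) ^ (-(1 : ℝ) / 2) * Real.exp (-ξ ^ 2 / (4 * t))

/-- `(d−1)`-dimensional Gaussian heat kernel (here `d = n+2`, so `d−1 = n+1`):
`G_t^{(d−1)}(v) = (4πt)^{−(d−1)/2} e^{−|v|²/(4t)}`. -/
noncomputable def Gtan (n : ℕ) (t : ℝ) (v : Fin (n + 1) → ℝ) : ℝ :=
  (4 * π * t) ^ (-((n : ℝ) + 1) / 2) * Real.exp (-(∑ i, (v i) ^ 2) / (4 * t))

/-- Half-space Dirichlet heat kernel in dimension `d = n+2`: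
`H(x,y,t) = G_t^{(d−1)}(x'−y') (G_t(x_d−y_d) − G_t(x_d+y_d))`. -/
noncomputable def H (n : ℕ) (t : ℝ) (x y : Fin (n + 2) → ℝ) : ℝ :=
  Gtan n t (fun i => x i.castSucc - y i.castSucc) *
    (G1 t (x (Fin.last (n + 1)) - y (Fin.last (n + 1))) -
      G1 t (x (Fin.last (n + 1)) + y (Fin.last (n + 1))))

/-- Component `i` of the vector `(∇_x + ∇_y) H(x,y,t)`. -/
noncomputable def D1 (n : ℕ) (t : ℝ) (i : Fin (n + 2)) (x y : Fin (n + 2) → ℝ) : ℝ :=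
  deriv (fun s => H n t (Function.update x i s) y) (x i) +
    deriv (fun s => H n t x (Function.update y i s)) (y i)

/-- Entry `(k,i)` of the matrix `∇_x (∇_x + ∇_y) H(x,y,t)`, i.e. `∂_{x_k}(∂_{x_i}+∂_{y_i})H`. -/
noncomputable def D2 (n : ℕ) (t : ℝ) (k i : Fin (n + 2)) (x y : Fin (n + 2) → ℝ) : ℝ :=
  deriv (fun s => D1 n t i (Function.update x k s) y) (x k)

/- ### auxiliary lemmas -/

lemma hasDerivAt_G1 (t : ℝ) (ht : 0 < t) (ξ : ℝ) :
    HasDerivAt (fun u => G1 t u) (G1 t ξ * (-ξ / (2 * t))) ξ := by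
  have h1 : HasDerivAt (fun u : ℝ => -u ^ 2 / (4 * t)) (-(2 * ξ) / (4 * t)) ξ := by
    simpa using ((hasDerivAt_pow 2 ξ).neg.div_const (4 * t))
  have h2 := (h1.exp).const_mul ((4 * π * t) ^ (-(1 : ℝ) / 2))
  refine h2.congr_deriv ?_
  unfold G1
  field_simp
  ring

lemma hasDerivAt_G1mul (t : ℝ) (ht : 0 < t) (ξ : ℝ) :
    HasDerivAt (fun u => G1 t u * (u / t)) (G1 t ξ * (1 / t - ξ ^ 2 / (2 * t ^ 2))) ξ := by
  have h := (hasDerivAt_G1 t ht ξ).mul ((hasDerivAt_id ξ).div_const t)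
  refine h.congr_deriv ?_
  simp only [id_eq]
  field_simp
  ring

lemma sum_update_sq (n : ℕ) (v : Fin (n+1) → ℝ) (j : Fin (n+1)) (u : ℝ) :
    ∑ i, (Function.update v j u i) ^ 2 = u ^ 2 + ∑ i ∈ Finset.univ \ {j}, (v i) ^ 2 := by
  have : ∀ i, (Function.update v j u i) ^ 2 = Function.update (fun i => (v i)^2) j (u^2) i := by
    intro i
    rcases eq_or_ne i j with h | h
    · subst h; simp
    · simp [Function.update_apply, h]
  simp_rw [this]
  exact Finset.sum_update_of_mem (Finset.mem_univ j) _ _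

lemma hasDerivAt_Gup (n : ℕ) (t : ℝ) (ht : 0 < t) (v : Fin (n+1) → ℝ) (j : Fin (n+1)) (u : ℝ) :
    HasDerivAt (fun u => Gtan n t (Function.update v j u))
      (Gtan n t (Function.update v j u) * (-u / (2 * t))) u := by
  obtain ⟨c, hc⟩ : ∃ c : ℝ, ∑ i ∈ Finset.univ \ {j}, (v i) ^ 2 = c := ⟨_, rfl⟩
  have heq : (fun u => Gtan n t (Function.update v j u)) =
      fun u => (4 * π * t) ^ (-((n : ℝ) + 1) / 2) * Real.exp (-(u ^ 2 + c) / (4 * t)) := by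
    funext u; unfold Gtan; rw [sum_update_sq, hc]
  rw [heq]
  have h1 : HasDerivAt (fun u : ℝ => -(u ^ 2 + c) / (4 * t)) (-(2 * u) / (4 * t)) u := by
    simpa using (((hasDerivAt_pow 2 u).add_const c).neg.div_const (4 * t))
  have h2 := (h1.exp).const_mul ((4 * π * t) ^ (-((n : ℝ) + 1) / 2))
  refine h2.congr_deriv ?_
  unfold Gtan
  rw [sum_update_sq, hc]
  field_simp
  ring

/- vectors after updates -/

lemma vec_upd_x (n : ℕ) (x y : Fin (n+2) → ℝ) (j : Fin (n+1)) (s : ℝ) :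
    (fun i : Fin (n+1) => Function.update x j.castSucc s i.castSucc - y i.castSucc) =
      Function.update (fun i : Fin (n+1) => x i.castSucc - y i.castSucc) j (s - y j.castSucc) := by
  funext i
  rcases eq_or_ne i j with h | h
  · subst h; simp
  · simp [Function.update_apply, h, Fin.castSucc_inj]

lemma vec_upd_y (n : ℕ) (x y : Fin (n+2) → ℝ) (j : Fin (n+1)) (s : ℝ) :
    (fun i : Fin (n+1) => x i.castSucc - Function.update y j.castSucc s i.castSucc) =
      Function.update (fun i : Fin (n+1) => x i.castSucc - y i.castSucc) j (x j.castSucc - s) := by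
  funext i
  rcases eq_or_ne i j with h | h
  · subst h; simp
  · simp [Function.update_apply, h, Fin.castSucc_inj]

lemma upd_tang_last (n : ℕ) (x : Fin (n+2) → ℝ) (j : Fin (n+1)) (s : ℝ) :
    Function.update x j.castSucc s (Fin.last (n+1)) = x (Fin.last (n+1)) := by
  rw [Function.update_of_ne (Fin.castSucc_lt_last j).ne']

lemma vec_upd_last_x (n : ℕ) (x y : Fin (n+2) → ℝ) (s : ℝ) :
    (fun i : Fin (n+1) => Function.update x (Fin.last (n+1)) s i.castSucc - y i.castSucc) =
      fun i : Fin (n+1) => x i.castSucc - y i.castSucc := by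
  funext i
  rw [Function.update_of_ne (Fin.castSucc_lt_last i).ne]

lemma vec_upd_last_y (n : ℕ) (x y : Fin (n+2) → ℝ) (s : ℝ) :
    (fun i : Fin (n+1) => x i.castSucc - Function.update y (Fin.last (n+1)) s i.castSucc) =
      fun i : Fin (n+1) => x i.castSucc - y i.castSucc := by
  funext i
  rw [Function.update_of_ne (Fin.castSucc_lt_last i).ne]

lemma upd_self (n : ℕ) (x y : Fin (n+2) → ℝ) (j : Fin (n+1)) :
    Function.update (fun i : Fin (n+1) => x i.castSucc - y i.castSucc) j
      (x j.castSucc - y j.castSucc) = fun i : Fin (n+1) => x i.castSucc - y i.castSucc := by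
  simpa using Function.update_eq_self j (fun i : Fin (n+1) => x i.castSucc - y i.castSucc)

lemma D1_tang (n : ℕ) (t : ℝ) (ht : 0 < t) (x y : Fin (n+2) → ℝ) (j : Fin (n+1)) :
    D1 n t j.castSucc x y = 0 := by
  obtain ⟨K, hK⟩ : ∃ K : ℝ, G1 t (x (Fin.last (n+1)) - y (Fin.last (n+1))) -
      G1 t (x (Fin.last (n+1)) + y (Fin.last (n+1))) = K := ⟨_, rfl⟩
  have hx : (fun s => H n t (Function.update x j.castSucc s) y) =
      fun s => Gtan n t (Function.update (fun i : Fin (n+1) => x i.castSucc - y i.castSucc) j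
        (s - y j.castSucc)) * K := by
    funext s; unfold H; rw [upd_tang_last, vec_upd_x, hK]
  have hy : (fun s => H n t x (Function.update y j.castSucc s)) =
      fun s => Gtan n t (Function.update (fun i : Fin (n+1) => x i.castSucc - y i.castSucc) j
        (x j.castSucc - s)) * K := by
    funext s; unfold H; rw [upd_tang_last, vec_upd_y, hK]
  have hdx : HasDerivAt (fun s => Gtan n t (Function.update
      (fun i : Fin (n+1) => x i.castSucc - y i.castSucc) j (s - y j.castSucc)) * K)
      (Gtan n t (fun i : Fin (n+1) => x i.castSucc - y i.castSucc) *
        (-(x j.castSucc - y j.castSucc) / (2 * t)) * K) (x j.castSucc) := by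
    have base := hasDerivAt_Gup n t ht (fun i : Fin (n+1) => x i.castSucc - y i.castSucc) j
      (x j.castSucc - y j.castSucc)
    have inner : HasDerivAt (fun s : ℝ => s - y j.castSucc) 1 (x j.castSucc) :=
      (hasDerivAt_id _).sub_const _
    have h := (base.comp (x j.castSucc) inner).mul_const K
    rw [upd_self] at h
    refine h.congr_deriv ?_
    ring
  have hdy : HasDerivAt (fun s => Gtan n t (Function.update
      (fun i : Fin (n+1) => x i.castSucc - y i.castSucc) j (x j.castSucc - s)) * K)
      (Gtan n t (fun i : Fin (n+1) => x i.castSucc - y i.castSucc) *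
        ((x j.castSucc - y j.castSucc) / (2 * t)) * K) (y j.castSucc) := by
    have base := hasDerivAt_Gup n t ht (fun i : Fin (n+1) => x i.castSucc - y i.castSucc) j
      (x j.castSucc - y j.castSucc)
    have inner : HasDerivAt (fun s : ℝ => x j.castSucc - s) (-1) (y j.castSucc) :=
      (hasDerivAt_id _).const_sub _
    have h := (base.comp (y j.castSucc) inner).mul_const K
    rw [upd_self] at h
    refine h.congr_deriv ?_
    ring
  unfold D1
  rw [hx, hy, hdx.deriv, hdy.deriv]
  ring

lemma D1_last (n : ℕ) (t : ℝ) (ht : 0 < t) (x y : Fin (n+2) → ℝ) :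
    D1 n t (Fin.last (n+1)) x y =
      Gtan n t (fun i : Fin (n+1) => x i.castSucc - y i.castSucc) *
        (G1 t (x (Fin.last (n+1)) + y (Fin.last (n+1))) *
          ((x (Fin.last (n+1)) + y (Fin.last (n+1))) / t)) := by
  obtain ⟨A, hA⟩ : ∃ A : ℝ, Gtan n t (fun i : Fin (n+1) => x i.castSucc - y i.castSucc) = A :=
    ⟨_, rfl⟩
  have hx : (fun s => H n t (Function.update x (Fin.last (n+1)) s) y) =
      fun s => A * (G1 t (s - y (Fin.last (n+1))) - G1 t (s + y (Fin.last (n+1)))) := by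
    funext s; unfold H; rw [vec_upd_last_x, Function.update_self, hA]
  have hy : (fun s => H n t x (Function.update y (Fin.last (n+1)) s)) =
      fun s => A * (G1 t (x (Fin.last (n+1)) - s) - G1 t (x (Fin.last (n+1)) + s)) := by
    funext s; unfold H; rw [vec_upd_last_y, Function.update_self, hA]
  obtain ⟨p, hp⟩ : ∃ p : ℝ, x (Fin.last (n+1)) = p := ⟨_, rfl⟩
  obtain ⟨q, hq⟩ : ∃ q : ℝ, y (Fin.last (n+1)) = q := ⟨_, rfl⟩
  simp only [hp, hq] at hx hy
  have hdx : HasDerivAt (fun s => A * (G1 t (s - q) - G1 t (s + q)))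
      (A * (G1 t (p - q) * (-(p - q) / (2 * t)) - G1 t (p + q) * (-(p + q) / (2 * t)))) p := by
    have h1 := (hasDerivAt_G1 t ht (p - q)).comp p ((hasDerivAt_id p).sub_const q)
    have h2 := (hasDerivAt_G1 t ht (p + q)).comp p ((hasDerivAt_id p).add_const q)
    have := (h1.sub h2).const_mul A
    refine this.congr_deriv ?_
    ring
  have hdy : HasDerivAt (fun s => A * (G1 t (p - s) - G1 t (p + s)))
      (A * (G1 t (p - q) * ((p - q) / (2 * t)) - G1 t (p + q) * (-(p + q) / (2 * t)))) q := by
    have h1 := (hasDerivAt_G1 t ht (p - q)).comp q ((hasDerivAt_id q).const_sub p)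
    have h2 := (hasDerivAt_G1 t ht (p + q)).comp q ((hasDerivAt_id q).const_add p)
    have := (h1.sub h2).const_mul A
    refine this.congr_deriv ?_
    ring
  unfold D1
  rw [hx, hy]
  simp only [hp, hq]
  rw [hdx.deriv, hdy.deriv, hA]
  ring

lemma D2_i_tang (n : ℕ) (t : ℝ) (ht : 0 < t) (x y : Fin (n+2) → ℝ) (k : Fin (n+2))
    (j : Fin (n+1)) : D2 n t k j.castSucc x y = 0 := by
  unfold D2
  have h : (fun s => D1 n t j.castSucc (Function.update x k s) y) = fun _ => 0 :=
    funext fun s => D1_tang n t ht (Function.update x k s) y j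
  rw [h]
  simp

lemma D2_tang_last (n : ℕ) (t : ℝ) (ht : 0 < t) (x y : Fin (n+2) → ℝ) (j : Fin (n+1)) :
    D2 n t j.castSucc (Fin.last (n+1)) x y =
      Gtan n t (fun i : Fin (n+1) => x i.castSucc - y i.castSucc) *
        (-(x j.castSucc - y j.castSucc) / (2 * t)) *
        (G1 t (x (Fin.last (n+1)) + y (Fin.last (n+1))) *
          ((x (Fin.last (n+1)) + y (Fin.last (n+1))) / t)) := by
  obtain ⟨M, hM⟩ : ∃ M : ℝ, G1 t (x (Fin.last (n+1)) + y (Fin.last (n+1))) *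
      ((x (Fin.last (n+1)) + y (Fin.last (n+1))) / t) = M := ⟨_, rfl⟩
  have h : (fun s => D1 n t (Fin.last (n+1)) (Function.update x j.castSucc s) y) =
      fun s => Gtan n t (Function.update (fun i : Fin (n+1) => x i.castSucc - y i.castSucc) j
        (s - y j.castSucc)) * M := by
    funext s
    rw [D1_last n t ht (Function.update x j.castSucc s) y, upd_tang_last, vec_upd_x, hM]
  have hd : HasDerivAt (fun s => Gtan n t (Function.update
      (fun i : Fin (n+1) => x i.castSucc - y i.castSucc) j (s - y j.castSucc)) * M)
      (Gtan n t (fun i : Fin (n+1) => x i.castSucc - y i.castSucc) *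
        (-(x j.castSucc - y j.castSucc) / (2 * t)) * M) (x j.castSucc) := by
    have base := hasDerivAt_Gup n t ht (fun i : Fin (n+1) => x i.castSucc - y i.castSucc) j
      (x j.castSucc - y j.castSucc)
    have inner : HasDerivAt (fun s : ℝ => s - y j.castSucc) 1 (x j.castSucc) :=
      (hasDerivAt_id _).sub_const _
    have h2 := (base.comp (x j.castSucc) inner).mul_const M
    rw [upd_self] at h2
    refine h2.congr_deriv ?_
    ring
  unfold D2
  rw [h, hd.deriv, hM]

lemma D2_last_last (n : ℕ) (t : ℝ) (ht : 0 < t) (x y : Fin (n+2) → ℝ) :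
    D2 n t (Fin.last (n+1)) (Fin.last (n+1)) x y =
      Gtan n t (fun i : Fin (n+1) => x i.castSucc - y i.castSucc) *
        (G1 t (x (Fin.last (n+1)) + y (Fin.last (n+1))) *
          (1 / t - (x (Fin.last (n+1)) + y (Fin.last (n+1))) ^ 2 / (2 * t ^ 2))) := by
  obtain ⟨A, hA⟩ : ∃ A : ℝ, Gtan n t (fun i : Fin (n+1) => x i.castSucc - y i.castSucc) = A :=
    ⟨_, rfl⟩
  obtain ⟨q, hq⟩ : ∃ q : ℝ, y (Fin.last (n+1)) = q := ⟨_, rfl⟩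
  have h : (fun s => D1 n t (Fin.last (n+1)) (Function.update x (Fin.last (n+1)) s) y) =
      fun s => A * (G1 t (s + q) * ((s + q) / t)) := by
    funext s
    rw [D1_last n t ht (Function.update x (Fin.last (n+1)) s) y, vec_upd_last_x,
      Function.update_self, hA, hq]
  have hd : HasDerivAt (fun s => A * (G1 t (s + q) * ((s + q) / t)))
      (A * (G1 t (x (Fin.last (n+1)) + q) *
        (1 / t - (x (Fin.last (n+1)) + q) ^ 2 / (2 * t ^ 2)))) (x (Fin.last (n+1))) := by
    have base := hasDerivAt_G1mul t ht (x (Fin.last (n+1)) + q)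
    have inner : HasDerivAt (fun s : ℝ => s + q) 1 (x (Fin.last (n+1))) :=
      (hasDerivAt_id _).add_const _
    have h2 := (base.comp (x (Fin.last (n+1))) inner).const_mul A
    refine h2.congr_deriv ?_
    ring
  unfold D2
  rw [h, hd.deriv, hA, hq]

lemma G1_pos (t ξ : ℝ) (ht : 0 < t) : 0 < G1 t ξ := by
  unfold G1
  have h4 : (0:ℝ) < 4 * π * t := by positivity
  exact mul_pos (Real.rpow_pos_of_pos h4 _) (Real.exp_pos _)

lemma Gtan_pos (n : ℕ) (t : ℝ) (v : Fin (n+1) → ℝ) (ht : 0 < t) : 0 < Gtan n t v := by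
  unfold Gtan
  have h4 : (0:ℝ) < 4 * π * t := by positivity
  exact mul_pos (Real.rpow_pos_of_pos h4 _) (Real.exp_pos _)

lemma key_ineq (m t r s : ℝ) (hm : 0 ≤ m) (ht : 0 < t) (hr : 0 ≤ r) (hs : 0 ≤ s) :
    (m + 1) * (r * s / (2 * t ^ 2)) + (1 / t + s ^ 2 / (2 * t ^ 2)) ≤
      (m + 4) * t⁻¹ * (1 + r / Real.sqrt t) * (1 + s ^ 2 / t) := by
  obtain ⟨a, ha, rfl⟩ : ∃ a : ℝ, 0 < a ∧ a ^ 2 = t :=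
    ⟨Real.sqrt t, Real.sqrt_pos.mpr ht, Real.sq_sqrt ht.le⟩
  rw [Real.sqrt_sq ha.le]
  obtain ⟨q, hq, rfl⟩ : ∃ q : ℝ, 0 ≤ q ∧ q * a = r :=
    ⟨r / a, div_nonneg hr ha.le, div_mul_cancel₀ r ha.ne'⟩
  obtain ⟨w, hw, rfl⟩ : ∃ w : ℝ, 0 ≤ w ∧ w * a = s :=
    ⟨s / a, div_nonneg hs ha.le, div_mul_cancel₀ s ha.ne'⟩
  have ha2 : (0:ℝ) < a ^ 2 := by positivity
  have key : (m + 1) * (q * w) / 2 + (1 + w ^ 2 / 2) ≤ (m + 4) * (1 + q) * (1 + w ^ 2) := by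
    nlinarith [mul_nonneg hq (sq_nonneg (w - 1)), mul_nonneg (mul_nonneg hm hq) (sq_nonneg (w - 1)),
      mul_nonneg hq (sq_nonneg w), mul_nonneg (mul_nonneg hm hq) (sq_nonneg w),
      mul_nonneg hm (sq_nonneg w), sq_nonneg w, mul_nonneg hm hq]
  have expand : (m + 1) * (q * a * (w * a) / (2 * (a ^ 2) ^ 2)) + (1 / a ^ 2 + (w * a) ^ 2 / (2 * (a ^ 2) ^ 2))
      = ((m + 1) * (q * w) / 2 + (1 + w ^ 2 / 2)) / a ^ 2 := by
    field_simp
  have expand2 : (m + 4) * (a ^ 2)⁻¹ * (1 + q * a / a) * (1 + (w * a) ^ 2 / a ^ 2)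
      = ((m + 4) * (1 + q) * (1 + w ^ 2)) / a ^ 2 := by
    field_simp
  rw [expand, expand2]
  exact (div_le_div_iff_of_pos_right ha2).mpr key


/-- For `d = n+2 ≥ 2` there is `C > 0` (depending only on `d`) such that for all
`t > 0` and all `x, y` in the half space:
`|∇_x(∇_x+∇_y)H(x,y,t)| ≤ C t^{−d/2−1} (1+|x'−y'|/√t)(1+(x_d+y_d)²/t)
  e^{−|x'−y'|²/(4t)} e^{−(x_d+y_d)²/(4t)}`. -/
theorem stmt_7 (n : ℕ) :
    ∃ C : ℝ, 0 < C ∧ ∀ t : ℝ, 0 < t → ∀ x y : Fin (n + 2) → ℝ,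
      0 < x (Fin.last (n + 1)) → 0 < y (Fin.last (n + 1)) →
      Real.sqrt (∑ k, ∑ i, (D2 n t k i x y) ^ 2) ≤
        C * t ^ (-((n : ℝ) + 2) / 2 - 1) *
          (1 + Real.sqrt (∑ i : Fin (n + 1), (x i.castSucc - y i.castSucc) ^ 2) / Real.sqrt t) *
          (1 + (x (Fin.last (n + 1)) + y (Fin.last (n + 1))) ^ 2 / t) *
          Real.exp (-(∑ i : Fin (n + 1), (x i.castSucc - y i.castSucc) ^ 2) / (4 * t)) *
          Real.exp (-(x (Fin.last (n + 1)) + y (Fin.last (n + 1))) ^ 2 / (4 * t)) := by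
  have hpi : (0:ℝ) < 4 * π := by positivity
  refine ⟨(4 * π) ^ (-((n : ℝ) + 2) / 2) * ((n : ℝ) + 4),
    mul_pos (Real.rpow_pos_of_pos hpi _) (by positivity), ?_⟩
  intro t ht x y hx hy
  have hs0 : 0 < x (Fin.last (n + 1)) + y (Fin.last (n + 1)) := add_pos hx hy
  obtain ⟨s0, hs0e⟩ : ∃ s0 : ℝ, x (Fin.last (n + 1)) + y (Fin.last (n + 1)) = s0 := ⟨_, rfl⟩
  rw [hs0e] at hs0
  have hr2 : (0:ℝ) ≤ ∑ i : Fin (n + 1), (x i.castSucc - y i.castSucc) ^ 2 :=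
    Finset.sum_nonneg fun i _ => sq_nonneg _
  obtain ⟨r2, hr2e⟩ : ∃ r2 : ℝ, ∑ i : Fin (n + 1), (x i.castSucc - y i.castSucc) ^ 2 = r2 :=
    ⟨_, rfl⟩
  rw [hr2e] at hr2
  rw [hr2e, hs0e]
  have hGv : 0 < Gtan n t (fun i : Fin (n+1) => x i.castSucc - y i.castSucc) := Gtan_pos n t _ ht
  have hG1 : 0 < G1 t s0 := G1_pos t s0 ht
  -- Step A: only the last column survives
  have hsum : ∑ k, ∑ i, (D2 n t k i x y) ^ 2 =
      ∑ k, (D2 n t k (Fin.last (n+1)) x y) ^ 2 := by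
    refine Finset.sum_congr rfl fun k _ => ?_
    refine Finset.sum_eq_single_of_mem (Fin.last (n+1)) (Finset.mem_univ _) fun i _ hne => ?_
    obtain ⟨j, rfl⟩ := Fin.exists_castSucc_eq.mpr hne
    rw [D2_i_tang n t ht x y k j]
    norm_num
  -- Step B: sqrt of sum of squares ≤ sum of abs
  have habs : Real.sqrt (∑ k, (D2 n t k (Fin.last (n+1)) x y) ^ 2) ≤
      ∑ k, |D2 n t k (Fin.last (n+1)) x y| := by
    have h1 : ∑ k, (D2 n t k (Fin.last (n+1)) x y) ^ 2 ≤
        (∑ k, |D2 n t k (Fin.last (n+1)) x y|) ^ 2 := by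
      have := Finset.sum_sq_le_sq_sum_of_nonneg
        (s := Finset.univ) (f := fun k => |D2 n t k (Fin.last (n+1)) x y|)
        (fun i _ => abs_nonneg _)
      simpa [sq_abs] using this
    calc Real.sqrt (∑ k, (D2 n t k (Fin.last (n+1)) x y) ^ 2)
        ≤ Real.sqrt ((∑ k, |D2 n t k (Fin.last (n+1)) x y|) ^ 2) := Real.sqrt_le_sqrt h1
      _ = ∑ k, |D2 n t k (Fin.last (n+1)) x y| :=
          Real.sqrt_sq (Finset.sum_nonneg fun i _ => abs_nonneg _)
  -- Step C: bound each entry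
  have hentry_t : ∀ j : Fin (n+1), |D2 n t j.castSucc (Fin.last (n+1)) x y| ≤
      Gtan n t (fun i : Fin (n+1) => x i.castSucc - y i.castSucc) * G1 t s0 *
        (Real.sqrt r2 * s0 / (2 * t ^ 2)) := by
    intro j
    rw [D2_tang_last n t ht x y j, hs0e]
    have hvj : |x j.castSucc - y j.castSucc| ≤ Real.sqrt r2 := by
      have hle : (x j.castSucc - y j.castSucc) ^ 2 ≤ r2 := by
        rw [← hr2e]
        exact Finset.single_le_sum (f := fun i : Fin (n+1) => (x i.castSucc - y i.castSucc) ^ 2)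
          (fun i _ => sq_nonneg _) (Finset.mem_univ j)
      calc |x j.castSucc - y j.castSucc| = Real.sqrt ((x j.castSucc - y j.castSucc) ^ 2) :=
            (Real.sqrt_sq_eq_abs _).symm
        _ ≤ Real.sqrt r2 := Real.sqrt_le_sqrt hle
    rw [abs_mul, abs_mul]
    rw [abs_of_pos hGv, abs_of_pos (by positivity : (0:ℝ) < G1 t s0 * (s0 / t))]
    rw [abs_div, abs_neg]
    calc Gtan n t (fun i : Fin (n+1) => x i.castSucc - y i.castSucc) *
          (|x j.castSucc - y j.castSucc| / |2 * t|) * (G1 t s0 * (s0 / t))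
        ≤ Gtan n t (fun i : Fin (n+1) => x i.castSucc - y i.castSucc) *
          (Real.sqrt r2 / |2 * t|) * (G1 t s0 * (s0 / t)) := by
          apply mul_le_mul_of_nonneg_right _ (by positivity)
          apply mul_le_mul_of_nonneg_left _ hGv.le
          exact div_le_div_of_nonneg_right hvj (by positivity) |>.trans_eq rfl
      _ = Gtan n t (fun i : Fin (n+1) => x i.castSucc - y i.castSucc) * G1 t s0 *
          (Real.sqrt r2 * s0 / (2 * t ^ 2)) := by
          rw [abs_of_pos (by positivity : (0:ℝ) < 2 * t)]
          field_simp
  have hentry_l : |D2 n t (Fin.last (n+1)) (Fin.last (n+1)) x y| ≤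
      Gtan n t (fun i : Fin (n+1) => x i.castSucc - y i.castSucc) * G1 t s0 *
        (1 / t + s0 ^ 2 / (2 * t ^ 2)) := by
    rw [D2_last_last n t ht x y, hs0e]
    rw [abs_mul, abs_mul, abs_of_pos hGv, abs_of_pos hG1]
    rw [mul_assoc]
    apply mul_le_mul_of_nonneg_left _ hGv.le
    apply mul_le_mul_of_nonneg_left _ hG1.le
    calc |1 / t - s0 ^ 2 / (2 * t ^ 2)| ≤ |1 / t| + |s0 ^ 2 / (2 * t ^ 2)| := abs_sub _ _
      _ = 1 / t + s0 ^ 2 / (2 * t ^ 2) := by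
          rw [abs_of_pos (by positivity), abs_of_nonneg (by positivity)]
  -- sum the bounds
  have hsumabs : ∑ k, |D2 n t k (Fin.last (n+1)) x y| ≤
      Gtan n t (fun i : Fin (n+1) => x i.castSucc - y i.castSucc) * G1 t s0 *
        (((n : ℝ) + 1) * (Real.sqrt r2 * s0 / (2 * t ^ 2)) + (1 / t + s0 ^ 2 / (2 * t ^ 2))) := by
    rw [Fin.sum_univ_castSucc]
    have h1 : ∑ j : Fin (n+1), |D2 n t j.castSucc (Fin.last (n+1)) x y| ≤
        ((n : ℝ) + 1) * (Gtan n t (fun i : Fin (n+1) => x i.castSucc - y i.castSucc) * G1 t s0 *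
          (Real.sqrt r2 * s0 / (2 * t ^ 2))) := by
      calc ∑ j : Fin (n+1), |D2 n t j.castSucc (Fin.last (n+1)) x y|
          ≤ ∑ _j : Fin (n+1), Gtan n t (fun i : Fin (n+1) => x i.castSucc - y i.castSucc) *
              G1 t s0 * (Real.sqrt r2 * s0 / (2 * t ^ 2)) :=
            Finset.sum_le_sum fun j _ => hentry_t j
        _ = ((n : ℝ) + 1) * (Gtan n t (fun i : Fin (n+1) => x i.castSucc - y i.castSucc) *
              G1 t s0 * (Real.sqrt r2 * s0 / (2 * t ^ 2))) := by
            rw [Finset.sum_const, Finset.card_univ, Fintype.card_fin, nsmul_eq_mul]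
            push_cast
            ring
    calc (∑ j : Fin (n+1), |D2 n t j.castSucc (Fin.last (n+1)) x y|) +
          |D2 n t (Fin.last (n+1)) (Fin.last (n+1)) x y|
        ≤ ((n : ℝ) + 1) * (Gtan n t (fun i : Fin (n+1) => x i.castSucc - y i.castSucc) * G1 t s0 *
            (Real.sqrt r2 * s0 / (2 * t ^ 2))) +
          Gtan n t (fun i : Fin (n+1) => x i.castSucc - y i.castSucc) * G1 t s0 *
            (1 / t + s0 ^ 2 / (2 * t ^ 2)) := add_le_add h1 hentry_l
      _ = Gtan n t (fun i : Fin (n+1) => x i.castSucc - y i.castSucc) * G1 t s0 *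
            (((n : ℝ) + 1) * (Real.sqrt r2 * s0 / (2 * t ^ 2)) + (1 / t + s0 ^ 2 / (2 * t ^ 2))) := by
          ring
  -- the product of the Gaussians
  have h4t : (0:ℝ) < 4 * π * t := by positivity
  have hprod : Gtan n t (fun i : Fin (n+1) => x i.castSucc - y i.castSucc) * G1 t s0 =
      (4 * π) ^ (-((n : ℝ) + 2) / 2) * t ^ (-((n : ℝ) + 2) / 2) *
        Real.exp (-r2 / (4 * t)) * Real.exp (-s0 ^ 2 / (4 * t)) := by
    unfold Gtan G1
    have he : (∑ i, ((fun i : Fin (n+1) => x i.castSucc - y i.castSucc) i) ^ 2) = r2 := by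
      simpa using hr2e
    rw [he]
    have hsplit : (4 * π * t) ^ (-((n : ℝ) + 1) / 2) * (4 * π * t) ^ (-(1:ℝ) / 2) =
        (4 * π * t) ^ (-((n : ℝ) + 2) / 2) := by
      rw [← Real.rpow_add h4t]
      norm_num
      ring_nf
    have hmulr : (4 * π * t) ^ (-((n : ℝ) + 2) / 2) =
        (4 * π) ^ (-((n : ℝ) + 2) / 2) * t ^ (-((n : ℝ) + 2) / 2) :=
      Real.mul_rpow hpi.le ht.le
    calc (4 * π * t) ^ (-((n : ℝ) + 1) / 2) * Real.exp (-r2 / (4 * t)) *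
          ((4 * π * t) ^ (-(1:ℝ) / 2) * Real.exp (-s0 ^ 2 / (4 * t)))
        = ((4 * π * t) ^ (-((n : ℝ) + 1) / 2) * (4 * π * t) ^ (-(1:ℝ) / 2)) *
            Real.exp (-r2 / (4 * t)) * Real.exp (-s0 ^ 2 / (4 * t)) := by ring
      _ = (4 * π) ^ (-((n : ℝ) + 2) / 2) * t ^ (-((n : ℝ) + 2) / 2) *
            Real.exp (-r2 / (4 * t)) * Real.exp (-s0 ^ 2 / (4 * t)) := by
          rw [hsplit, hmulr]
  -- t-power split
  have htpow : t ^ (-((n : ℝ) + 2) / 2 - 1) = t ^ (-((n : ℝ) + 2) / 2) * t⁻¹ := by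
    rw [Real.rpow_sub ht, Real.rpow_one, div_eq_mul_inv]
  -- key inequality
  have hkey := key_ineq (n : ℝ) t (Real.sqrt r2) s0 (Nat.cast_nonneg n) ht
    (Real.sqrt_nonneg _) hs0.le
  -- final assembly
  calc Real.sqrt (∑ k, ∑ i, (D2 n t k i x y) ^ 2)
      = Real.sqrt (∑ k, (D2 n t k (Fin.last (n+1)) x y) ^ 2) := by rw [hsum]
    _ ≤ ∑ k, |D2 n t k (Fin.last (n+1)) x y| := habs
    _ ≤ Gtan n t (fun i : Fin (n+1) => x i.castSucc - y i.castSucc) * G1 t s0 *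
          (((n : ℝ) + 1) * (Real.sqrt r2 * s0 / (2 * t ^ 2)) + (1 / t + s0 ^ 2 / (2 * t ^ 2))) :=
        hsumabs
    _ ≤ Gtan n t (fun i : Fin (n+1) => x i.castSucc - y i.castSucc) * G1 t s0 *
          (((n : ℝ) + 4) * t⁻¹ * (1 + Real.sqrt r2 / Real.sqrt t) * (1 + s0 ^ 2 / t)) :=
        mul_le_mul_of_nonneg_left hkey (by positivity)
    _ = (4 * π) ^ (-((n : ℝ) + 2) / 2) * ((n : ℝ) + 4) * t ^ (-((n : ℝ) + 2) / 2 - 1) *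
          (1 + Real.sqrt r2 / Real.sqrt t) * (1 + s0 ^ 2 / t) *
          Real.exp (-r2 / (4 * t)) * Real.exp (-s0 ^ 2 / (4 * t)) := by
        rw [hprod, htpow]
        ring
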